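/- Let G ⊆ G' be finite graphs on the same vertex set partially, let H be a connected component of G and H' a connected component of G' with V(H) ⊆ V(H'). Then Diam(H') ≤ Diam(H) + 2·lp(G'[V(H') \ V(H)]) + 2, where lp denotes the length of the longest (simple) path and Diam the graph diameter. -/

import Mathlib

open SimpleGraph

/-- Inclusion homomorphism from an induced subgraph to the ambient graph. -/
private def inclHom {V : Type*} (G : SimpleGraph V) (s : Set V) : G.induce s →g G :=
  ⟨Subtype.val, fun h => h⟩

private lemma inclHom_injective {V : Type*} (G : SimpleGraph V) (s : Set V) :
    Function.Injective (inclHom G s) := Subtype.val_injective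

/-- Transfer a walk of `G` whose support lies in `t` to a walk of `H.induce t`, for `G ≤ H`. -/
private lemma walkToInduce {V : Type*} {G H : SimpleGraph V} (hle : G ≤ H) {t : Set V} :
    ∀ {a b : V} (p : G.Walk a b) (ha : a ∈ t) (hb : b ∈ t),
      (∀ x ∈ p.support, x ∈ t) →
      ∃ q : (H.induce t).Walk ⟨a, ha⟩ ⟨b, hb⟩,
        q.length = p.length ∧ q.support.map Subtype.val = p.support
  | _, _, SimpleGraph.Walk.nil, _, _, _ => ⟨.nil, rfl, rfl⟩
  | _, _, @SimpleGraph.Walk.cons _ _ a y b h p, ha, hb, hs => by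
      have hy : y ∈ t := hs y (by
        rw [SimpleGraph.Walk.support_cons]
        exact List.mem_cons_of_mem _ p.start_mem_support)
      obtain ⟨q, h1, h2⟩ := walkToInduce hle p hy hb (fun x hx => hs x (by simp [hx]))
      exact ⟨.cons (by exact hle h) q, by exact congrArg (· + 1) h1,
        by exact congrArg (a :: ·) h2⟩

/-- The subgraph induced on the support of a connected component is connected. -/
private lemma suppInduceConnected {V : Type*} [DecidableEq V] (G : SimpleGraph V) (C : G.ConnectedComponent) :
    (G.induce C.supp).Connected := by
  obtain ⟨v, hv⟩ := C.exists_rep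
  have hvm : v ∈ C.supp := hv
  rw [connected_iff]
  constructor
  · rintro ⟨a, ha⟩ ⟨b, hb⟩
    have ha' := ha; have hb' := hb
    rw [ConnectedComponent.mem_supp_iff] at ha' hb'
    obtain ⟨p⟩ := ConnectedComponent.exact (ha'.trans hb'.symm)
    have hsup : ∀ x ∈ p.support, x ∈ C.supp := by
      intro x hx
      rw [ConnectedComponent.mem_supp_iff, ← hb']
      exact ConnectedComponent.sound ⟨p.dropUntil x hx⟩
    obtain ⟨q, -, -⟩ := walkToInduce le_rfl p ha hb hsup
    exact ⟨q⟩
  · exact ⟨⟨v, hvm⟩⟩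

theorem stmt_4 {V : Type*} [Fintype V] [DecidableEq V]
    (G G' : SimpleGraph V) (hle : G ≤ G')
    (C : G.ConnectedComponent) (C' : G'.ConnectedComponent)
    (hsub : C.supp ⊆ C'.supp)
    (L : ℕ)
    (hL : ∀ (x y : ↥(C'.supp \ C.supp))
        (p : (G'.induce (C'.supp \ C.supp)).Walk x y), p.IsPath → p.length ≤ L) :
    (G'.induce C'.supp).diam ≤ (G.induce C.supp).diam + 2 * L + 2 := by
  classical
  -- a base point in C
  obtain ⟨v0, hv0⟩ := C.exists_rep
  have hv0C : v0 ∈ C.supp := hv0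
  have hv0C' : v0 ∈ C'.supp := hsub hv0C
  have hconnC : (G.induce C.supp).Connected := suppInduceConnected G C
  have hconnC' : (G'.induce C'.supp).Connected := suppInduceConnected G' C'
  haveI : Nonempty ↥C.supp := ⟨⟨v0, hv0C⟩⟩
  haveI : Nonempty ↥C'.supp := ⟨⟨v0, hv0C'⟩⟩
  set dC := (G.induce C.supp).diam with hdC
  -- ediam of induced C is finite
  have hediamC : (G.induce C.supp).ediam ≠ ⊤ := by
    obtain ⟨u, v, huv⟩ := (G.induce C.supp).exists_edist_eq_ediam_of_finite
    rw [← huv]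
    exact edist_ne_top_iff_reachable.mpr (hconnC u v)
  have hediamC_eq : (G.induce C.supp).ediam = (dC : ℕ∞) := by
    rw [hdC, SimpleGraph.diam, ENat.coe_toNat hediamC]
  -- Step A : distance inside C
  have keyA : ∀ a b : ↥C'.supp, (a : V) ∈ C.supp → (b : V) ∈ C.supp →
      (G'.induce C'.supp).edist a b ≤ (dC : ℕ∞) := by
    rintro ⟨a, haC'⟩ ⟨b, hbC'⟩ ha hb
    obtain ⟨p, hp⟩ := (hconnC ⟨a, ha⟩ ⟨b, hb⟩).exists_walk_length_eq_edist
    set p' : G.Walk a b := p.map (inclHom G C.supp) with hp'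
    have hsup : ∀ x ∈ p'.support, x ∈ C'.supp := by
      intro x hx
      replace hx : x ∈ (p.map (inclHom G C.supp)).support := hx
      rw [SimpleGraph.Walk.support_map] at hx
      obtain ⟨z, hz, rfl⟩ := List.mem_map.mp hx
      exact hsub z.2
    obtain ⟨q, hq1, -⟩ := walkToInduce hle p' haC' hbC' hsup
    calc (G'.induce C'.supp).edist ⟨a, haC'⟩ ⟨b, hbC'⟩ ≤ q.length := edist_le q
      _ = (p.length : ℕ∞) := by rw [hq1, hp']; exact congrArg _ (SimpleGraph.Walk.length_map _ _)
      _ = (G.induce C.supp).edist ⟨a, ha⟩ ⟨b, hb⟩ := hp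
      _ ≤ (G.induce C.supp).ediam := edist_le_ediam
      _ = (dC : ℕ∞) := hediamC_eq
  -- Step B : every vertex is close to C
  set c0' : ↥C'.supp := ⟨v0, hv0C'⟩ with hc0'
  have claim1 : ∀ (u w : ↥C'.supp) (p : (G'.induce C'.supp).Walk u w), (w : V) ∈ C.supp →
      ∃ c : ↥C'.supp, (c : V) ∈ C.supp ∧ ∃ q : (G'.induce C'.supp).Walk u c,
        ∀ x ∈ q.support, x ≠ c → (x : V) ∉ C.supp := by
    intro u w p
    induction p with
    | nil =>
        intro hw
        refine ⟨_, hw, .nil, ?_⟩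
        intro x hx hne
        simp only [SimpleGraph.Walk.support_nil, List.mem_singleton] at hx
        exact absurd hx hne
    | @cons u y _ h p ih =>
        intro hw
        by_cases hu : (u : V) ∈ C.supp
        · refine ⟨u, hu, .nil, ?_⟩
          intro x hx hne
          simp only [SimpleGraph.Walk.support_nil, List.mem_singleton] at hx
          exact absurd hx hne
        · obtain ⟨c, hc, q, hq⟩ := ih hw
          refine ⟨c, hc, .cons h q, ?_⟩
          intro x hx hne
          rw [SimpleGraph.Walk.support_cons, List.mem_cons] at hx
          rcases hx with rfl | hx
          · exact hu
          · exact hq x hx hne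
  have claimB : ∀ u : ↥C'.supp, ∃ c : ↥C'.supp, (c : V) ∈ C.supp ∧
      (G'.induce C'.supp).edist u c ≤ (L : ℕ∞) + 1 := by
    intro u
    by_cases hu : (u : V) ∈ C.supp
    · exact ⟨u, hu, by simp⟩
    obtain ⟨c, hc, q, hq⟩ := claim1 u c0' (hconnC' u c0').some hv0C
    refine ⟨c, hc, ?_⟩
    set P : (G'.induce C'.supp).Walk u c := (q.toPath : (G'.induce C'.supp).Path u c).val
      with hPdef
    have hPpath : P.IsPath := q.toPath.2
    have hPsupp : ∀ x ∈ P.support, x ≠ c → (x : V) ∉ C.supp :=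
      fun x hx => hq x (q.support_toPath_subset hx)
    have hcu : c ≠ u := by
      intro h; rw [h] at hc; exact hu hc
    obtain ⟨y, hadj, r, hr⟩ := SimpleGraph.Walk.exists_eq_cons_of_ne hcu P.reverse
    have hRpath : P.reverse.IsPath := hPpath.reverse
    rw [hr, SimpleGraph.Walk.cons_isPath_iff] at hRpath
    obtain ⟨hrpath, hcnot⟩ := hRpath
    have hrsupp : ∀ x ∈ r.support, (x : V) ∉ C.supp := by
      intro x hx
      have hxP : x ∈ P.support := by
        have : x ∈ P.reverse.support := by rw [hr]; simp [hx]
        rwa [SimpleGraph.Walk.support_reverse, List.mem_reverse] at this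
      exact hPsupp x hxP (fun heq => hcnot (heq ▸ hx))
    set r' : G'.Walk (y : V) (u : V) := r.map (inclHom G' C'.supp) with hr'def
    have hr'path : r'.IsPath := SimpleGraph.Walk.map_isPath_of_injective (inclHom_injective G' C'.supp) hrpath
    have hr'supp : ∀ x ∈ r'.support, x ∈ C'.supp \ C.supp := by
      intro x hx
      replace hx : x ∈ (r.map (inclHom G' C'.supp)).support := hx
      rw [SimpleGraph.Walk.support_map] at hx
      obtain ⟨z, hz, rfl⟩ := List.mem_map.mp hx
      exact ⟨z.2, hrsupp z hz⟩
    have hy' : (y : V) ∈ C'.supp \ C.supp :=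
      hr'supp _ (SimpleGraph.Walk.start_mem_support r')
    have hu' : (u : V) ∈ C'.supp \ C.supp := ⟨u.2, hu⟩
    obtain ⟨q', hq'len, hq'supp⟩ := walkToInduce le_rfl r' hy' hu' hr'supp
    have hq'path : q'.IsPath := by
      rw [SimpleGraph.Walk.isPath_def]
      have : (q'.support.map Subtype.val).Nodup := by
        rw [hq'supp]
        exact hr'path.support_nodup
      exact this.of_map Subtype.val
    have hlen : r.length ≤ L := by
      have h1 := hL _ _ q' hq'path
      rw [hq'len, hr'def] at h1
      exact (SimpleGraph.Walk.length_map _ r).symm.trans_le h1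
    have hPlen : P.length = r.length + 1 := by
      have : P.reverse.length = r.length + 1 := by rw [hr]; simp
      rwa [SimpleGraph.Walk.length_reverse] at this
    calc (G'.induce C'.supp).edist u c ≤ (P.length : ℕ∞) := edist_le P
      _ = ((r.length + 1 : ℕ) : ℕ∞) := by rw [hPlen]
      _ ≤ ((L + 1 : ℕ) : ℕ∞) := by exact_mod_cast Nat.add_le_add_right hlen 1
      _ = (L : ℕ∞) + 1 := by push_cast; ring
  -- Combine
  have hfinal : (G'.induce C'.supp).ediam ≤ ((dC + 2 * L + 2 : ℕ) : ℕ∞) := by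
    apply ediam_le_of_edist_le
    intro a b
    obtain ⟨ca, hca, hda⟩ := claimB a
    obtain ⟨cb, hcb, hdb⟩ := claimB b
    calc (G'.induce C'.supp).edist a b
        ≤ (G'.induce C'.supp).edist a ca + (G'.induce C'.supp).edist ca b :=
          SimpleGraph.edist_triangle
      _ ≤ (G'.induce C'.supp).edist a ca +
            ((G'.induce C'.supp).edist ca cb + (G'.induce C'.supp).edist cb b) := by
          gcongr
          exact SimpleGraph.edist_triangle
      _ ≤ ((L : ℕ∞) + 1) + ((dC : ℕ∞) + ((L : ℕ∞) + 1)) := by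
          gcongr
          · exact keyA ca cb hca hcb
          · rw [SimpleGraph.edist_comm]; exact hdb
      _ = ((dC + 2 * L + 2 : ℕ) : ℕ∞) := by push_cast; ring
  have := ENat.toNat_le_toNat hfinal (ENat.coe_ne_top _)
  rw [ENat.toNat_coe] at this
  simpa [SimpleGraph.diam] using this
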